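/- arXiv:2108.06096 — 2 statements merged into one kernel-verified Lean document; each statement's English description precedes it below -/
import Mathlib

section
/- Let Σ ⊆ N ∪ P be a finite vocabulary, φ a shape over Σ, and G a graph. Then for every node name x ∉ N_G ∪ (Σ ∩ N), we have x ∈ ⟦φ⟧_G if and only if ⋆ ∈ ⟦φ⟧_⋆. -/
/-- SHACL path expressions over property names `PN`:
`E ::= p | p⁻ | E ∪ E | E ∘ E | E* | E?`. -/
inductive PathExpr (PN : Type) : Type where
  | prop  : PN → PathExpr PN
  | inv   : PN → PathExpr PN
  | union : PathExpr PN → PathExpr PN → PathExpr PN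
  | comp  : PathExpr PN → PathExpr PN → PathExpr PN
  | star  : PathExpr PN → PathExpr PN
  | opt   : PathExpr PN → PathExpr PN

/-- SHACL shapes over node names `NN`, shape names `SN`, property names `PN`:
`φ ::= ⊤ | s | {c} | φ∧φ | φ∨φ | ¬φ | ≥ₙE.φ | eq(p,E) | disj(p,E) | closed(Q)`. -/
inductive Shape (NN SN PN : Type) : Type where
  | top     : Shape NN SN PN
  | sname   : SN → Shape NN SN PN
  | single  : NN → Shape NN SN PN
  | sand    : Shape NN SN PN → Shape NN SN PN → Shape NN SN PN
  | sor     : Shape NN SN PN → Shape NN SN PN → Shape NN SN PN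
  | snot    : Shape NN SN PN → Shape NN SN PN
  | atLeast : ℕ → PathExpr PN → Shape NN SN PN → Shape NN SN PN
  | eqS     : PN → PathExpr PN → Shape NN SN PN
  | disjS   : PN → PathExpr PN → Shape NN SN PN
  | closed  : Finset PN → Shape NN SN PN

/-- An interpretation over a vocabulary `Σ ⊆ N ∪ S ∪ P` (the three components of
the vocabulary are recorded as `sigmaN`, `sigmaS`, `sigmaP`), with domain `Δ`:
it assigns an element of `Δ` to each node name, a subset of `Δ` to each shape
name, and a binary relation on `Δ` to each property name. -/
structure Interp (NN SN PN Δ : Type) where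
  sigmaN : Set NN
  sigmaS : Set SN
  sigmaP : Set PN
  nodeI  : NN → Δ
  shapeI : SN → Set Δ
  propI  : PN → Set (Δ × Δ)

variable {NN SN PN Δ : Type}

/-- Semantics of path expressions: binary relations on the domain. -/
def evalPath (I : Interp NN SN PN Δ) : PathExpr PN → Set (Δ × Δ)
  | .prop p => I.propI p
  | .inv p  => {x | (x.2, x.1) ∈ I.propI p}
  | .union E₁ E₂ => evalPath I E₁ ∪ evalPath I E₂
  | .comp E₁ E₂  => {x | ∃ z, (x.1, z) ∈ evalPath I E₁ ∧ (z, x.2) ∈ evalPath I E₂}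
  | .star E => {x | Relation.ReflTransGen (fun a b => (a, b) ∈ evalPath I E) x.1 x.2}
  | .opt E  => evalPath I E ∪ {x | x.1 = x.2}

/-- Semantics of shapes: subsets of the domain.  `closed Q` holds of `a` when
`a` has no outgoing `p`-edge for any property name `p` of the vocabulary
outside `Q`. -/
def evalShape (I : Interp NN SN PN Δ) : Shape NN SN PN → Set Δ
  | .top => Set.univ
  | .sname s => I.shapeI s
  | .single c => {I.nodeI c}
  | .sand φ ψ => evalShape I φ ∩ evalShape I ψ
  | .sor φ ψ  => evalShape I φ ∪ evalShape I ψ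
  | .snot φ   => (evalShape I φ)ᶜ
  | .atLeast n E φ =>
      {a | (n : ℕ∞) ≤ (evalShape I φ ∩ {b | (a, b) ∈ evalPath I E}).encard}
  | .eqS p E  => {a | {b | (a, b) ∈ I.propI p} = {b | (a, b) ∈ evalPath I E}}
  | .disjS p E => {a | {b | (a, b) ∈ I.propI p} ∩ {b | (a, b) ∈ evalPath I E} = ∅}
  | .closed Q => {a | ∀ p ∈ I.sigmaP, p ∉ Q → ∀ b, (a, b) ∉ I.propI p}

/-- A path expression is over a vocabulary whose property-name part is `VP`. -/
def PathExpr.over (VP : Set PN) : PathExpr PN → Prop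
  | .prop p => p ∈ VP
  | .inv p  => p ∈ VP
  | .union E₁ E₂ => E₁.over VP ∧ E₂.over VP
  | .comp E₁ E₂  => E₁.over VP ∧ E₂.over VP
  | .star E => E.over VP
  | .opt E  => E.over VP

/-- A shape is over the vocabulary `Σ = VN ∪ VS ∪ VP` if it uses only symbols
from `Σ`. -/
def Shape.over (VN : Set NN) (VS : Set SN) (VP : Set PN) : Shape NN SN PN → Prop
  | .top => True
  | .sname s => s ∈ VS
  | .single c => c ∈ VN
  | .sand φ ψ => φ.over VN VS VP ∧ ψ.over VN VS VP
  | .sor φ ψ  => φ.over VN VS VP ∧ ψ.over VN VS VP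
  | .snot φ   => φ.over VN VS VP
  | .atLeast _ E φ => E.over VP ∧ φ.over VN VS VP
  | .eqS p E  => p ∈ VP ∧ E.over VP
  | .disjS p E => p ∈ VP ∧ E.over VP
  | .closed Q => ↑Q ⊆ VP

/-- A graph: a finite set of facts `p(a,b)`. -/
structure RDFGraph (NN PN : Type) where
  facts : Finset (PN × NN × NN)

/-- `N_G`: the node names occurring in the graph `G`. -/
def RDFGraph.nodes [DecidableEq NN] (G : RDFGraph NN PN) : Finset NN :=
  G.facts.image (fun f => f.2.1) ∪ G.facts.image (fun f => f.2.2)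

/-- The natural interpretation `I(G)` of a graph `G`: its vocabulary is all of
`N ∪ P` (no shape names), its domain is the set `N` of ALL node names, each
node name denotes itself, and each property name `p` denotes
`{(a,b) | p(a,b) ∈ G}`. -/
def RDFGraph.natural (G : RDFGraph NN PN) (SN : Type) : Interp NN SN PN NN where
  sigmaN := Set.univ
  sigmaS := ∅
  sigmaP := Set.univ
  nodeI  := id
  shapeI := fun _ => ∅
  propI  := fun p => {x | (p, x.1, x.2) ∈ G.facts}

/-- The interpretation `I_⋆` determined by a graph `G` and a finite vocabulary
`Σ ⊆ N ∪ P` (with node part `VN` and property part `VP`): it is just like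
`I(G)` except that its domain is `N_G ∪ (Σ ∩ N) ∪ {⋆}`, where the fresh
element `⋆` is modelled by `none`. -/
def RDFGraph.starI [DecidableEq NN] (G : RDFGraph NN PN) (SN : Type)
    (VN : Finset NN) (VP : Set PN) :
    Interp NN SN PN (Option {x : NN // x ∈ G.nodes ∪ VN}) where
  sigmaN := ↑VN
  sigmaS := ∅
  sigmaP := VP
  nodeI  := fun c => if h : c ∈ G.nodes ∪ VN then some ⟨c, h⟩ else none
  shapeI := fun _ => ∅
  propI  := fun p => {x | ∃ a b, x.1 = some a ∧ x.2 = some b ∧ (p, a.1, b.1) ∈ G.facts}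

/-- Whether a path expression matches the empty path. -/
def nullable : PathExpr PN → Prop
  | .prop _ => False
  | .inv _ => False
  | .union E₁ E₂ => nullable E₁ ∨ nullable E₂
  | .comp E₁ E₂ => nullable E₁ ∧ nullable E₂
  | .star _ => True
  | .opt _ => True

lemma mem_nodes_left [DecidableEq NN] {G : RDFGraph NN PN} {p : PN} {a b : NN}
    (h : (p, a, b) ∈ G.facts) : a ∈ G.nodes := by
  simp only [RDFGraph.nodes, Finset.mem_union, Finset.mem_image]
  exact Or.inl ⟨(p, a, b), h, rfl⟩

lemma mem_nodes_right [DecidableEq NN] {G : RDFGraph NN PN} {p : PN} {a b : NN}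
    (h : (p, a, b) ∈ G.facts) : b ∈ G.nodes := by
  simp only [RDFGraph.nodes, Finset.mem_union, Finset.mem_image]
  exact Or.inr ⟨(p, a, b), h, rfl⟩

lemma natStuck [DecidableEq NN] (G : RDFGraph NN PN) {a : NN} (ha : a ∉ G.nodes)
    (E : PathExpr PN) (b : NN) :
    ((a, b) ∈ evalPath (G.natural SN) E) ↔ (b = a ∧ nullable E) := by
  induction E generalizing b with
  | prop p =>
    simp only [evalPath, RDFGraph.natural, Set.mem_setOf_eq, nullable, and_false, iff_false]
    exact fun h => ha (mem_nodes_left h)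
  | inv p =>
    simp only [evalPath, RDFGraph.natural, Set.mem_setOf_eq, nullable, and_false, iff_false]
    exact fun h => ha (mem_nodes_right h)
  | union E₁ E₂ ih₁ ih₂ =>
    simp only [evalPath, Set.mem_union, ih₁, ih₂, nullable]
    tauto
  | comp E₁ E₂ ih₁ ih₂ =>
    simp only [evalPath, Set.mem_setOf_eq, nullable]
    constructor
    · rintro ⟨z, h1, h2⟩
      obtain ⟨rfl, hn1⟩ := (ih₁ z).mp h1
      obtain ⟨hb, hn2⟩ := (ih₂ b).mp h2
      exact ⟨hb, hn1, hn2⟩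
    · rintro ⟨rfl, hn1, hn2⟩
      exact ⟨b, (ih₁ b).mpr ⟨rfl, hn1⟩, (ih₂ b).mpr ⟨rfl, hn2⟩⟩
  | star E ih =>
    simp only [evalPath, Set.mem_setOf_eq, nullable, and_true]
    constructor
    · intro h
      induction h with
      | refl => rfl
      | tail h' e ih' =>
        subst ih'
        exact ((ih _).mp e).1
    · rintro rfl; exact Relation.ReflTransGen.refl
  | opt E ih =>
    simp only [evalPath, Set.mem_union, Set.mem_setOf_eq, nullable, and_true]
    constructor
    · rintro (h | h)
      · exact ((ih b).mp h).1
      · exact h.symm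
    · rintro rfl; exact Or.inr rfl

lemma starStuck [DecidableEq NN] (G : RDFGraph NN PN) (VN : Finset NN) (VP : Set PN)
    (E : PathExpr PN) (v : Option {y : NN // y ∈ G.nodes ∪ VN}) :
    ((none, v) ∈ evalPath (G.starI SN VN VP) E) ↔ (v = none ∧ nullable E) := by
  induction E generalizing v with
  | prop p =>
    simp [evalPath, RDFGraph.starI, nullable]
  | inv p =>
    simp [evalPath, RDFGraph.starI, nullable]
  | union E₁ E₂ ih₁ ih₂ =>
    simp only [evalPath, Set.mem_union, ih₁, ih₂, nullable]
    tauto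
  | comp E₁ E₂ ih₁ ih₂ =>
    simp only [evalPath, Set.mem_setOf_eq, nullable]
    constructor
    · rintro ⟨z, h1, h2⟩
      obtain ⟨rfl, hn1⟩ := (ih₁ z).mp h1
      obtain ⟨hb, hn2⟩ := (ih₂ v).mp h2
      exact ⟨hb, hn1, hn2⟩
    · rintro ⟨rfl, hn1, hn2⟩
      exact ⟨none, (ih₁ none).mpr ⟨rfl, hn1⟩, (ih₂ none).mpr ⟨rfl, hn2⟩⟩
  | star E ih =>
    simp only [evalPath, Set.mem_setOf_eq, nullable, and_true]
    constructor
    · intro h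
      induction h with
      | refl => rfl
      | tail h' e ih' =>
        subst ih'
        exact ((ih _).mp e).1
    · rintro rfl; exact Relation.ReflTransGen.refl
  | opt E ih =>
    simp only [evalPath, Set.mem_union, Set.mem_setOf_eq, nullable, and_true]
    constructor
    · rintro (h | h)
      · exact ((ih v).mp h).1
      · exact h.symm
    · rintro rfl; exact Or.inr rfl

/-- Let `Σ ⊆ N ∪ P` be a finite vocabulary (node part `VN`,
property part `VP`), `φ` a shape over `Σ`, and `G` a graph.  Then for every
node name `x ∉ N_G ∪ (Σ ∩ N)`, we have `x ∈ ⟦φ⟧_G` iff `⋆ ∈ ⟦φ⟧_⋆`. -/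
theorem statement1 [DecidableEq NN]
    (VN : Finset NN) (VP : Finset PN) (φ : Shape NN SN PN)
    (hφ : φ.over ↑VN (∅ : Set SN) ↑VP)
    (G : RDFGraph NN PN) (x : NN) (hx : x ∉ G.nodes ∪ VN) :
    x ∈ evalShape (G.natural SN) φ ↔
      (none : Option {y : NN // y ∈ G.nodes ∪ VN}) ∈
        evalShape (G.starI SN VN ↑VP) φ := by
  have hxn : x ∉ G.nodes := fun h => hx (Finset.mem_union_left _ h)
  induction φ with
  | top => simp [evalShape]
  | sname s => simp [evalShape, RDFGraph.natural, RDFGraph.starI]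
  | single c =>
    have hc : c ∈ G.nodes ∪ VN := Finset.mem_union_right _ hφ
    simp only [evalShape, RDFGraph.natural, RDFGraph.starI, Set.mem_singleton_iff, id]
    rw [dif_pos hc]
    constructor
    · rintro rfl; exact absurd hc hx
    · intro h; exact absurd h (by simp)
  | sand φ ψ ihφ ihψ =>
    exact and_congr (ihφ hφ.1) (ihψ hφ.2)
  | sor φ ψ ihφ ihψ =>
    exact or_congr (ihφ hφ.1) (ihψ hφ.2)
  | snot φ ihφ =>
    exact not_congr (ihφ hφ)
  | atLeast n E ψ ihψ =>
    have ihψ' := ihψ hφ.2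
    simp only [evalShape, Set.mem_setOf_eq]
    suffices h : (evalShape (G.natural SN) ψ ∩
        {b | (x, b) ∈ evalPath (G.natural SN) E}).encard =
        (evalShape (G.starI SN VN ↑VP) ψ ∩
        {v | ((none : Option {y : NN // y ∈ G.nodes ∪ VN}), v) ∈
          evalPath (G.starI SN VN ↑VP) E}).encard by
      rw [h]
    by_cases hn : nullable E
    · by_cases hmem : x ∈ evalShape (G.natural SN) ψ
      · have h1 : evalShape (G.natural SN) ψ ∩
            {b | (x, b) ∈ evalPath (G.natural SN) E} = {x} := by
          ext b
          simp only [Set.mem_inter_iff, Set.mem_setOf_eq, natStuck G hxn, hn, and_true,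
            Set.mem_singleton_iff]
          exact ⟨fun h => h.2, fun h => ⟨h ▸ hmem, h⟩⟩
        have h2 : evalShape (G.starI SN VN ↑VP) ψ ∩
            {v | ((none : Option {y : NN // y ∈ G.nodes ∪ VN}), v) ∈
              evalPath (G.starI SN VN ↑VP) E} = {none} := by
          ext v
          simp only [Set.mem_inter_iff, Set.mem_setOf_eq, starStuck, hn, and_true,
            Set.mem_singleton_iff]
          exact ⟨fun h => h.2, fun h => ⟨h ▸ (ihψ'.mp hmem), h⟩⟩
        rw [h1, h2, Set.encard_singleton, Set.encard_singleton]
      · have hmem' : (none : Option {y : NN // y ∈ G.nodes ∪ VN}) ∉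
            evalShape (G.starI SN VN ↑VP) ψ := fun h => hmem (ihψ'.mpr h)
        have h1 : evalShape (G.natural SN) ψ ∩
            {b | (x, b) ∈ evalPath (G.natural SN) E} = ∅ := by
          ext b
          simp only [Set.mem_inter_iff, Set.mem_setOf_eq, natStuck G hxn, hn, and_true,
            Set.mem_empty_iff_false, iff_false, not_and]
          rintro h rfl; exact hmem h
        have h2 : evalShape (G.starI SN VN ↑VP) ψ ∩
            {v | ((none : Option {y : NN // y ∈ G.nodes ∪ VN}), v) ∈
              evalPath (G.starI SN VN ↑VP) E} = ∅ := by
          ext v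
          simp only [Set.mem_inter_iff, Set.mem_setOf_eq, starStuck, hn, and_true,
            Set.mem_empty_iff_false, iff_false, not_and]
          rintro h rfl; exact hmem' h
        rw [h1, h2, Set.encard_empty, Set.encard_empty]
    · have h1 : evalShape (G.natural SN) ψ ∩
          {b | (x, b) ∈ evalPath (G.natural SN) E} = ∅ := by
        ext b
        simp [natStuck G hxn, hn]
      have h2 : evalShape (G.starI SN VN ↑VP) ψ ∩
          {v | ((none : Option {y : NN // y ∈ G.nodes ∪ VN}), v) ∈
            evalPath (G.starI SN VN ↑VP) E} = ∅ := by
        ext v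
        simp [starStuck, hn]
      rw [h1, h2, Set.encard_empty, Set.encard_empty]
  | eqS p E =>
    simp only [evalShape, Set.mem_setOf_eq]
    have h1 : {b | (x, b) ∈ (G.natural SN).propI p} = (∅ : Set NN) := by
      ext b
      simp only [RDFGraph.natural, Set.mem_setOf_eq, Set.mem_empty_iff_false, iff_false]
      exact fun h => hxn (mem_nodes_left h)
    have h2 : {b | (x, b) ∈ evalPath (G.natural SN) E} = {b | b = x ∧ nullable E} := by
      ext b; exact natStuck G hxn E b
    have h3 : {v | ((none : Option {y : NN // y ∈ G.nodes ∪ VN}), v) ∈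
        (G.starI SN VN ↑VP).propI p} = ∅ := by
      ext v; simp [RDFGraph.starI]
    have h4 : {v | ((none : Option {y : NN // y ∈ G.nodes ∪ VN}), v) ∈
        evalPath (G.starI SN VN ↑VP) E} = {v | v = none ∧ nullable E} := by
      ext v; exact starStuck G VN ↑VP E v
    rw [h1, h2, h3, h4]
    by_cases hn : nullable E
    · simp only [hn, and_true]
      constructor
      · intro h
        exact absurd ((Set.ext_iff.mp h x).mpr rfl) (Set.notMem_empty x)
      · intro h
        exact absurd ((Set.ext_iff.mp h none).mpr rfl) (Set.notMem_empty _)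
    · simp [hn]
  | disjS p E =>
    simp only [evalShape, Set.mem_setOf_eq]
    have h1 : {b | (x, b) ∈ (G.natural SN).propI p} = (∅ : Set NN) := by
      ext b
      simp only [RDFGraph.natural, Set.mem_setOf_eq, Set.mem_empty_iff_false, iff_false]
      exact fun h => hxn (mem_nodes_left h)
    have h3 : {v | ((none : Option {y : NN // y ∈ G.nodes ∪ VN}), v) ∈
        (G.starI SN VN ↑VP).propI p} = ∅ := by
      ext v; simp [RDFGraph.starI]
    rw [h1, h3]
    simp
  | closed Q =>
    simp only [evalShape, Set.mem_setOf_eq]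
    constructor
    · intro _ p _ _ v hv
      obtain ⟨a, b, ha, _⟩ := hv
      exact Option.some_ne_none _ ha.symm
    · intro _ p _ _ b hb
      exact hxn (mem_nodes_left hb)
end

section
/- Let Σ ⊆ N ∪ P be a finite vocabulary, φ a shape over Σ, and G a graph. If x and y are two node names, neither of which belongs to N_G ∪ (Σ ∩ N), then x ∈ ⟦φ⟧_G if and only if y ∈ ⟦φ⟧_G. -/
variable {NN SN PN Δ : Type}

/-- A graph: a finite set of facts `p(a,b)`. -/
structure ShGraph (NN PN : Type) where
  facts : Finset (PN × NN × NN)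

/-- `N_G`: the node names occurring in the graph `G`. -/
def ShGraph.nodes [DecidableEq NN] (G : ShGraph NN PN) : Finset NN :=
  G.facts.image (fun f => f.2.1) ∪ G.facts.image (fun f => f.2.2)

/-- The natural interpretation `I(G)` of a graph `G`: its vocabulary is all of
`N ∪ P` (no shape names), its domain is the set `N` of ALL node names, each
node name denotes itself, and each property name `p` denotes
`{(a,b) | p(a,b) ∈ G}`. -/
def ShGraph.natural (G : ShGraph NN PN) (SN : Type) : Interp NN SN PN NN where
  sigmaN := Set.univ
  sigmaS := ∅
  sigmaP := Set.univ
  nodeI  := id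
  shapeI := fun _ => ∅
  propI  := fun p => {x | (p, x.1, x.2) ∈ G.facts}

/-- The interpretation `I_⋆` determined by a graph `G` and a finite vocabulary
`Σ ⊆ N ∪ P` (with node part `VN` and property part `VP`): it is just like
`I(G)` except that its domain is `N_G ∪ (Σ ∩ N) ∪ {⋆}`, where the fresh
element `⋆` is modelled by `none`. -/
def ShGraph.starI [DecidableEq NN] (G : ShGraph NN PN) (SN : Type)
    (VN : Finset NN) (VP : Set PN) :
    Interp NN SN PN (Option {x : NN // x ∈ G.nodes ∪ VN}) where
  sigmaN := ↑VN
  sigmaS := ∅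
  sigmaP := VP
  nodeI  := fun c => if h : c ∈ G.nodes ∪ VN then some ⟨c, h⟩ else none
  shapeI := fun _ => ∅
  propI  := fun p => {x | ∃ a b, x.1 = some a ∧ x.2 = some b ∧ (p, a.1, b.1) ∈ G.facts}

lemma fresh_no_edge_left [DecidableEq NN] (G : ShGraph NN PN) {a : NN} (ha : a ∉ G.nodes)
    (p : PN) (b : NN) : (a, b) ∉ (G.natural SN).propI p := by
  intro h
  exact ha (Finset.mem_union.mpr (Or.inl (Finset.mem_image.mpr ⟨(p, a, b), h, rfl⟩)))

lemma fresh_no_edge_right [DecidableEq NN] (G : ShGraph NN PN) {a : NN} (ha : a ∉ G.nodes)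
    (p : PN) (b : NN) : (b, a) ∉ (G.natural SN).propI p := by
  intro h
  exact ha (Finset.mem_union.mpr (Or.inr (Finset.mem_image.mpr ⟨(p, b, a), h, rfl⟩)))

lemma path_fresh [DecidableEq NN] (G : ShGraph NN PN) (E : PathExpr PN) {a : NN}
    (ha : a ∉ G.nodes) :
    (∀ b, (a, b) ∈ evalPath (G.natural SN) E → a = b) ∧
    (∀ b, (b, a) ∈ evalPath (G.natural SN) E → b = a) := by
  induction E with
  | prop p =>
      exact ⟨fun b h => absurd h (fresh_no_edge_left G ha p b),
             fun b h => absurd h (fresh_no_edge_right G ha p b)⟩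
  | inv p =>
      exact ⟨fun b h => absurd h (fresh_no_edge_right (SN := SN) G ha p b),
             fun b h => absurd h (fresh_no_edge_left (SN := SN) G ha p b)⟩
  | union E₁ E₂ ih₁ ih₂ =>
      constructor
      · intro b h
        rcases h with h | h
        · exact ih₁.1 b h
        · exact ih₂.1 b h
      · intro b h
        rcases h with h | h
        · exact ih₁.2 b h
        · exact ih₂.2 b h
  | comp E₁ E₂ ih₁ ih₂ =>
      constructor
      · rintro b ⟨z, h₁, h₂⟩
        obtain rfl := ih₁.1 z h₁
        exact ih₂.1 b h₂
      · rintro b ⟨z, h₁, h₂⟩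
        obtain rfl := ih₂.2 z h₂
        exact ih₁.2 b h₁
  | star E ih =>
      constructor
      · intro b h
        simp only [evalPath, Set.mem_setOf_eq] at h
        induction h with
        | refl => rfl
        | tail h₁ h₂ ih' =>
            obtain rfl := ih'
            exact ih.1 _ h₂
      · intro b h
        simp only [evalPath, Set.mem_setOf_eq] at h
        induction h using Relation.ReflTransGen.head_induction_on with
        | refl => rfl
        | head h₁ h₂ ih' =>
            obtain rfl := ih'
            exact ih.2 _ h₁
  | opt E ih =>
      constructor
      · intro b h
        rcases h with h | h
        · exact ih.1 b h
        · exact h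
      · intro b h
        rcases h with h | h
        · exact ih.2 b h
        · exact h

lemma path_refl_iff [DecidableEq NN] (G : ShGraph NN PN) (E : PathExpr PN) {x y : NN}
    (hx : x ∉ G.nodes) (hy : y ∉ G.nodes) :
    (x, x) ∈ evalPath (G.natural SN) E ↔ (y, y) ∈ evalPath (G.natural SN) E := by
  induction E with
  | prop p =>
      exact iff_of_false (fresh_no_edge_left G hx p x) (fresh_no_edge_left G hy p y)
  | inv p =>
      exact iff_of_false (fresh_no_edge_left (SN := SN) G hx p x)
        (fresh_no_edge_left (SN := SN) G hy p y)
  | union E₁ E₂ ih₁ ih₂ =>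
      exact or_congr ih₁ ih₂
  | comp E₁ E₂ ih₁ ih₂ =>
      constructor
      · rintro ⟨z, h₁, h₂⟩
        obtain rfl := (path_fresh G E₁ hx).1 z h₁
        exact ⟨y, ih₁.mp h₁, ih₂.mp h₂⟩
      · rintro ⟨z, h₁, h₂⟩
        obtain rfl := (path_fresh G E₁ hy).1 z h₁
        exact ⟨x, ih₁.mpr h₁, ih₂.mpr h₂⟩
  | star E ih =>
      exact iff_of_true Relation.ReflTransGen.refl Relation.ReflTransGen.refl
  | opt E ih =>
      exact iff_of_true (Or.inr rfl) (Or.inr rfl)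

/-- Let `Σ ⊆ N ∪ P` be a finite vocabulary (node part `VN`,
property part `VP`), `φ` a shape over `Σ`, and `G` a graph.  If `x` and `y`
are two node names, neither of which belongs to `N_G ∪ (Σ ∩ N)`, then
`x ∈ ⟦φ⟧_G` iff `y ∈ ⟦φ⟧_G`. -/
theorem statement3 [DecidableEq NN]
    (VN : Finset NN) (VP : Finset PN) (φ : Shape NN SN PN)
    (hφ : φ.over ↑VN (∅ : Set SN) ↑VP)
    (G : ShGraph NN PN) (x y : NN)
    (hx : x ∉ G.nodes ∪ VN) (hy : y ∉ G.nodes ∪ VN) :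
    x ∈ evalShape (G.natural SN) φ ↔ y ∈ evalShape (G.natural SN) φ := by
  have hx1 : x ∉ G.nodes := fun h => hx (Finset.mem_union.mpr (Or.inl h))
  have hx2 : x ∉ VN := fun h => hx (Finset.mem_union.mpr (Or.inr h))
  have hy1 : y ∉ G.nodes := fun h => hy (Finset.mem_union.mpr (Or.inl h))
  have hy2 : y ∉ VN := fun h => hy (Finset.mem_union.mpr (Or.inr h))
  clear hx hy
  induction φ with
  | top => simp [evalShape]
  | sname s =>
      simp only [Shape.over] at hφ
      exact absurd hφ (Set.notMem_empty s)
  | single c =>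
      simp only [Shape.over, Finset.coe_sort_coe, Finset.mem_coe] at hφ
      simp only [evalShape, ShGraph.natural, Set.mem_singleton_iff, id]
      exact iff_of_false (fun h => hx2 (h ▸ hφ)) (fun h => hy2 (h ▸ hφ))
  | sand φ ψ ihφ ihψ =>
      simp only [evalShape, Set.mem_inter_iff]
      exact and_congr (ihφ hφ.1) (ihψ hφ.2)
  | sor φ ψ ihφ ihψ =>
      simp only [evalShape, Set.mem_union]
      exact or_congr (ihφ hφ.1) (ihψ hφ.2)
  | snot φ ihφ =>
      simp only [evalShape, Set.mem_compl_iff]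
      exact not_congr (ihφ hφ)
  | atLeast n E ψ ih =>
      have hiff := ih hφ.2
      simp only [evalShape, Set.mem_setOf_eq]
      suffices h : (evalShape (G.natural SN) ψ ∩
            {b | (x, b) ∈ evalPath (G.natural SN) E}).encard =
          (evalShape (G.natural SN) ψ ∩
            {b | (y, b) ∈ evalPath (G.natural SN) E}).encard by rw [h]
      by_cases hc : x ∈ evalShape (G.natural SN) ψ ∧ (x, x) ∈ evalPath (G.natural SN) E
      · have hxs : evalShape (G.natural SN) ψ ∩
            {b | (x, b) ∈ evalPath (G.natural SN) E} = {x} := by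
          ext b
          constructor
          · rintro ⟨_, hb2⟩
            exact ((path_fresh G E hx1).1 b hb2).symm
          · rintro rfl
            exact ⟨hc.1, hc.2⟩
        have hys : evalShape (G.natural SN) ψ ∩
            {b | (y, b) ∈ evalPath (G.natural SN) E} = {y} := by
          ext b
          constructor
          · rintro ⟨_, hb2⟩
            exact ((path_fresh G E hy1).1 b hb2).symm
          · rintro rfl
            exact ⟨hiff.mp hc.1, (path_refl_iff G E hx1 hy1).mp hc.2⟩
        rw [hxs, hys, Set.encard_singleton, Set.encard_singleton]
      · have hc' : ¬ (y ∈ evalShape (G.natural SN) ψ ∧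
            (y, y) ∈ evalPath (G.natural SN) E) := fun h =>
          hc ⟨hiff.mpr h.1, (path_refl_iff G E hx1 hy1).mpr h.2⟩
        have hxs : evalShape (G.natural SN) ψ ∩
            {b | (x, b) ∈ evalPath (G.natural SN) E} = ∅ := by
          ext b
          simp only [Set.mem_inter_iff, Set.mem_empty_iff_false, iff_false, not_and]
          intro hb1 hb2
          obtain rfl := ((path_fresh G E hx1).1 b hb2).symm
          exact hc ⟨hb1, hb2⟩
        have hys : evalShape (G.natural SN) ψ ∩
            {b | (y, b) ∈ evalPath (G.natural SN) E} = ∅ := by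
          ext b
          simp only [Set.mem_inter_iff, Set.mem_empty_iff_false, iff_false, not_and]
          intro hb1 hb2
          obtain rfl := ((path_fresh G E hy1).1 b hb2).symm
          exact hc' ⟨hb1, hb2⟩
        rw [hxs, hys]
  | eqS p E =>
      simp only [evalShape, Set.mem_setOf_eq]
      have key : ∀ {z : NN}, z ∉ G.nodes →
          ({b | (z, b) ∈ (G.natural SN).propI p} = {b | (z, b) ∈ evalPath (G.natural SN) E}
            ↔ (z, z) ∉ evalPath (G.natural SN) E) := by
        intro z hz
        have hzp : {b | (z, b) ∈ (G.natural SN).propI p} = (∅ : Set NN) :=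
          Set.eq_empty_iff_forall_notMem.mpr (fun b => fresh_no_edge_left (SN := SN) G hz p b)
        rw [hzp]
        constructor
        · intro h hzz
          have : z ∈ ({b | (z, b) ∈ evalPath (G.natural SN) E} : Set NN) := hzz
          rw [← h] at this
          exact this
        · intro h
          symm
          apply Set.eq_empty_iff_forall_notMem.mpr
          intro b hb
          obtain rfl := ((path_fresh G E hz).1 b hb).symm
          exact h hb
      rw [key hx1, key hy1]
      exact not_congr (path_refl_iff G E hx1 hy1)
  | disjS p E =>
      simp only [evalShape, Set.mem_setOf_eq]
      refine iff_of_true ?_ ?_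
      · exact Set.eq_empty_iff_forall_notMem.mpr
          (fun b hb => fresh_no_edge_left (SN := SN) G hx1 p b hb.1)
      · exact Set.eq_empty_iff_forall_notMem.mpr
          (fun b hb => fresh_no_edge_left (SN := SN) G hy1 p b hb.1)
  | closed Q =>
      simp only [evalShape, Set.mem_setOf_eq]
      exact iff_of_true (fun p _ _ b => fresh_no_edge_left G hx1 p b)
        (fun p _ _ b => fresh_no_edge_left G hy1 p b)
end
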